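/- Let $P$ be a Markov transition operator with invariant probability $\pi$, let $f:\mathcal{X}\to[0,1]$ be measurable, $t>0$, and $S_n=\sum_{k=1}^n f(X_k)$ for the chain started from $\pi$. Then $\mathbb{E}_\pi[e^{tS_n}] = \langle e^{tf/2}, \widehat{P}_t^{\,n-1} e^{tf/2}\rangle_{L^2(\pi)}$, where $\widehat{P}_t g = e^{tf/2}P(e^{tf/2}g)$; consequently $\mathbb{E}_\pi[e^{tS_n}] \le \pi(e^{tf})\,\|\widehat{P}_t\|_{L^2(\pi)}^{n-1}$. -/

import Mathlib

open MeasureTheory ProbabilityTheory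
open scoped RealInnerProductSpace


/-- Auxiliary: push a `π`-a.e. equality to `κ x`-a.e. for `π`-a.e. `x`, using invariance. -/
lemma ae_ae_of_ae_inv {X : Type*} [MeasurableSpace X] (π : Measure X)
    (κ : Kernel X X) [IsMarkovKernel κ] (hinv : π.bind κ = π)
    {g h : X → ℝ} (hgh : g =ᵐ[π] h) : ∀ᵐ x ∂π, g =ᵐ[κ x] h := by
  have hs : π {x | ¬ g x = h x} = 0 := hgh
  obtain ⟨N, hsub, hNmeas, hN0⟩ := exists_measurable_superset_of_null hs
  have hbind : ∫⁻ x, κ x N ∂π = 0 := by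
    rw [← Measure.bind_apply hNmeas κ.measurable.aemeasurable, hinv]; exact hN0
  have h0 : ∀ᵐ x ∂π, κ x N = 0 := by
    have := (lintegral_eq_zero_iff (κ.measurable_coe hNmeas)).mp hbind
    filter_upwards [this] with x hx using hx
  filter_upwards [h0] with x hx
  exact measure_mono_null (fun y hy => hsub hy) hx

theorem hoeffding_stmt3
    {X : Type*} [MeasurableSpace X] (π : Measure X) [IsProbabilityMeasure π]
    (κ : Kernel X X) [IsMarkovKernel κ] (hinv : π.bind κ = π)
    (f : X → ℝ) (hf : Measurable f) (hf01 : ∀ x, f x ∈ Set.Icc (0 : ℝ) 1)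
    (t : ℝ) (ht : 0 < t)
    (G : ℕ → X → ℝ)
    (hG1 : ∀ x, G 1 x = Real.exp (t * f x))
    (hGS : ∀ m, 1 ≤ m → ∀ x, G (m + 1) x = Real.exp (t * f x) * ∫ y, G m y ∂(κ x))
    (Phat : Lp ℝ 2 π →L[ℝ] Lp ℝ 2 π)
    (hPhat : ∀ g : Lp ℝ 2 π, Phat g =ᵐ[π] fun x =>
      Real.exp (t * f x / 2) * ∫ y, Real.exp (t * f y / 2) * g y ∂(κ x))
    (V : Lp ℝ 2 π) (hV : V =ᵐ[π] fun x => Real.exp (t * f x / 2))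
    (n : ℕ) (hn : 1 ≤ n) :
    (∫ x, G n x ∂π) = ∫ x, V x * ((Phat ^ (n - 1)) V) x ∂π ∧
    (∫ x, G n x ∂π) ≤ (∫ x, Real.exp (t * f x) ∂π) * ‖Phat‖ ^ (n - 1) := by
  -- Key a.e. identity by induction
  have key : ∀ m, 1 ≤ m →
      G m =ᵐ[π] fun x => Real.exp (t * f x / 2) * ((Phat ^ (m - 1)) V) x := by
    intro m hm
    induction m, hm using Nat.le_induction with
    | base =>
      simp only [Nat.sub_self, pow_zero, ContinuousLinearMap.one_apply]
      filter_upwards [hV] with x hx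
      rw [hG1, hx, ← Real.exp_add]
      ring_nf
    | succ m hm ih =>
      set W : Lp ℝ 2 π := (Phat ^ (m - 1)) V with hW
      have h1 : ∀ᵐ x ∂π, G m =ᵐ[κ x] fun y => Real.exp (t * f y / 2) * W y :=
        ae_ae_of_ae_inv π κ hinv ih
      have h2 := hPhat W
      filter_upwards [h1, h2] with x hx hPx
      have hint : (∫ y, G m y ∂(κ x)) = ∫ y, Real.exp (t * f y / 2) * W y ∂(κ x) :=
        integral_congr_ae hx
      have hm1 : m + 1 - 1 = (m - 1) + 1 := by omega
      have hpow : (Phat ^ (m + 1 - 1)) V = Phat W := by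
        rw [hW, hm1, pow_succ', ContinuousLinearMap.mul_apply]
      have he : Real.exp (t * f x) = Real.exp (t * f x / 2) * Real.exp (t * f x / 2) := by
        rw [← Real.exp_add]; ring_nf
      rw [hGS m hm, hint, hpow, hPx, he]
      ring
  set W : Lp ℝ 2 π := (Phat ^ (n - 1)) V with hW
  have heq : (∫ x, G n x ∂π) = ∫ x, V x * W x ∂π := by
    refine integral_congr_ae ?_
    filter_upwards [key n hn, hV] with x hx hVx
    rw [hx, hVx]
  refine ⟨heq, ?_⟩
  -- inner product formulation
  have hinner : (∫ x, V x * W x ∂π) = ⟪V, W⟫ := by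
    rw [MeasureTheory.L2.inner_def]
    exact integral_congr_ae (Filter.Eventually.of_forall fun x => by
      simp [RCLike.inner_apply, mul_comm])
  have hnormV : ‖V‖ ^ 2 = ∫ x, Real.exp (t * f x) ∂π := by
    rw [← real_inner_self_eq_norm_sq, MeasureTheory.L2.inner_def]
    refine integral_congr_ae ?_
    filter_upwards [hV] with x hx
    simp only [RCLike.inner_apply, RCLike.conj_to_real, hx]
    rw [← Real.exp_add]
    ring_nf
  have hCS : ⟪V, W⟫ ≤ ‖V‖ * ‖W‖ := real_inner_le_norm V W
  have hWn : ‖W‖ ≤ ‖Phat‖ ^ (n - 1) * ‖V‖ := by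
    refine le_trans ((Phat ^ (n - 1)).le_opNorm V) ?_
    gcongr
    rcases Nat.eq_zero_or_pos (n - 1) with h0 | hpos
    · rw [h0, pow_zero, pow_zero]
      exact ContinuousLinearMap.norm_id_le
    · exact norm_pow_le' Phat hpos
  calc (∫ x, G n x ∂π) = ⟪V, W⟫ := by rw [heq, hinner]
    _ ≤ ‖V‖ * (‖Phat‖ ^ (n - 1) * ‖V‖) := le_trans hCS (mul_le_mul_of_nonneg_left hWn (norm_nonneg V))
    _ = ‖V‖ ^ 2 * ‖Phat‖ ^ (n - 1) := by ring
    _ = (∫ x, Real.exp (t * f x) ∂π) * ‖Phat‖ ^ (n - 1) := by rw [hnormV]
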